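/- If there exist b > 0 and a nondecreasing function N : ℝ₊ → [1,∞) such that Σ_{k=n}^m e^{b(m-k)} ‖(A_m^k)* x*‖ ≤ N(n) ‖x*‖ for all m ≥ n and x* ∈ X*, then the system is nonuniformly exponentially stable. -/

import Mathlib

open scoped BigOperators

/-- The evolution operator `A_m^n = A(m) ∘ ⋯ ∘ A(n+1)`, with `A_n^n = 1`. -/
noncomputable def evol {X : Type*} [NormedAddCommGroup X] [NormedSpace ℝ X]
    (A : ℕ → X →L[ℝ] X) (m n : ℕ) : X →L[ℝ] X :=
  ((List.range (m - n)).map (fun k => A (n + k + 1))).foldl (fun P B => B ∘L P) 1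

theorem stmt9 {X : Type*} [NormedAddCommGroup X] [NormedSpace ℝ X] [CompleteSpace X]
    (A : ℕ → X →L[ℝ] X) (b : ℝ) (N : ℝ → ℝ) (hb : 0 < b)
    (hmono : MonotoneOn N (Set.Ici 0)) (hN1 : ∀ t : ℝ, 0 ≤ t → 1 ≤ N t)
    (h : ∀ n m : ℕ, n ≤ m → ∀ xs : X →L[ℝ] ℝ,
      ∑ k ∈ Finset.Icc n m, Real.exp (b * ((m : ℝ) - k)) * ‖xs.comp (evol A m k)‖
        ≤ N n * ‖xs‖) :
    ∃ α : ℝ, ∃ M : ℝ → ℝ, 0 < α ∧ MonotoneOn M (Set.Ici 0) ∧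
      (∀ t : ℝ, 0 ≤ t → 1 ≤ M t) ∧
      ∀ n m : ℕ, n ≤ m → ∀ x : X,
        ‖evol A m n x‖ ≤ M n * Real.exp (-α * ((m : ℝ) - n)) * ‖x‖ := by
  refine ⟨b, N, hb, hmono, hN1, fun n m hnm x => ?_⟩
  have hNn : (0:ℝ) ≤ N n := le_trans zero_le_one (hN1 n (Nat.cast_nonneg n))
  -- key: for every functional xs, the single k = n term bounds
  have key : ∀ xs : X →L[ℝ] ℝ,
      Real.exp (b * ((m : ℝ) - n)) * ‖xs.comp (evol A m n)‖ ≤ N n * ‖xs‖ := by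
    intro xs
    refine le_trans ?_ (h n m hnm xs)
    refine Finset.single_le_sum (f := fun k : ℕ => Real.exp (b * ((m : ℝ) - (k:ℝ))) * ‖xs.comp (evol A m k)‖)
      (fun k _ => mul_nonneg (Real.exp_pos _).le (norm_nonneg _)) ?_
    simp [hnm]
  by_cases hx : evol A m n x = 0
  · rw [hx, norm_zero]
    positivity
  · obtain ⟨g, hg1, hgx⟩ := exists_dual_vector ℝ (evol A m n x) (norm_ne_zero_iff.mpr hx)
    have h1 : ‖evol A m n x‖ = g (evol A m n x) := by
      simpa using hgx.symm
    have h2 : g (evol A m n x) ≤ ‖g.comp (evol A m n)‖ * ‖x‖ := by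
      calc g (evol A m n x) ≤ ‖g.comp (evol A m n) x‖ := le_abs_self _
        _ ≤ ‖g.comp (evol A m n)‖ * ‖x‖ := (g.comp (evol A m n)).le_opNorm x
    have h3 : ‖g.comp (evol A m n)‖ ≤ N n * Real.exp (-b * ((m : ℝ) - n)) := by
      have hkey := key g
      rw [hg1, mul_one] at hkey
      have he : (0:ℝ) < Real.exp (b * ((m : ℝ) - n)) := Real.exp_pos _
      rw [neg_mul, Real.exp_neg, ← div_eq_mul_inv, le_div_iff₀ he]
      linarith [hkey]
    calc ‖evol A m n x‖ = g (evol A m n x) := h1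
      _ ≤ ‖g.comp (evol A m n)‖ * ‖x‖ := h2
      _ ≤ N n * Real.exp (-b * ((m : ℝ) - n)) * ‖x‖ :=
        mul_le_mul_of_nonneg_right h3 (norm_nonneg x)
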